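/- Every uncountable compact metric space admits a non-atomic Borel probability measure. -/

import Mathlib

open MeasureTheory Set

theorem stmt15 {M : Type*} [MetricSpace M] [CompactSpace M]
    [MeasurableSpace M] [BorelSpace M]
    (h : ¬(Set.univ : Set M).Countable) :
    ∃ μ : Measure M, IsProbabilityMeasure μ ∧ ∀ x : M, μ {x} = 0 := by
  -- M is Polish
  haveI : PolishSpace M := inferInstance
  obtain ⟨f, -, hfc, hfi⟩ :=
    isClosed_univ.exists_nat_bool_injection_of_not_countable (C := (univ : Set M)) h
  -- the Cantor group
  set G := ℕ → ZMod 2 with hG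
  letI : MeasurableSpace G := borel G
  haveI : BorelSpace G := ⟨rfl⟩
  -- 0 is not isolated in G
  haveI : (nhdsWithin (0 : G) {(0:G)}ᶜ).NeBot := by
    rw [← mem_closure_iff_nhdsWithin_neBot]
    rw [mem_closure_iff_nhds]
    intro U hU
    rw [nhds_pi, Filter.mem_pi] at hU
    obtain ⟨I, hIfin, t, ht, hsub⟩ := hU
    obtain ⟨j, hj⟩ := hIfin.infinite_compl.nonempty
    refine ⟨Function.update (0 : G) j 1, hsub ?_, ?_⟩
    · intro i hi
      have : i ≠ j := fun e => hj (e ▸ hi)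
      simp [Function.update_of_ne this]
      exact mem_of_mem_nhds (ht i)
    · simp only [mem_compl_iff, mem_singleton_iff]
      intro hcon
      have := congrFun hcon j
      simp only [Function.update_self, Pi.zero_apply] at this
      exact one_ne_zero this
  -- Haar measure on G
  let μ := Measure.addHaarMeasure (⊤ : TopologicalSpace.PositiveCompacts G)
  haveI : IsProbabilityMeasure μ := by
    constructor
    have := Measure.addHaarMeasure_self (K₀ := (⊤ : TopologicalSpace.PositiveCompacts G))
    simpa using this
  haveI : NullSingletonClass μ := inferInstance
  -- the embedding G → M
  let e : G → (ℕ → Bool) := fun z i => decide (z i = 1)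
  have hec : Continuous e := by
    apply continuous_pi
    intro i
    exact Continuous.comp (continuous_of_discreteTopology : Continuous fun a : ZMod 2 => decide (a = 1)) (continuous_apply i)
  have hei : Function.Injective e := by
    intro a b hab
    funext i
    have := congrFun hab i
    simp only [e] at this
    revert this
    revert hab
    generalize a i = x
    generalize b i = y
    intro _
    revert x y
    decide
  let g := f ∘ e
  have hgc : Continuous g := hfc.comp hec
  have hgi : Function.Injective g := hfi.comp hei
  refine ⟨μ.map g, Measure.isProbabilityMeasure_map hgc.measurable.aemeasurable, fun x => ?_⟩
  rw [Measure.map_apply hgc.measurable (measurableSet_singleton x)]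
  have hsub : (g ⁻¹' {x}).Subsingleton := fun a ha b hb => hgi (ha.trans hb.symm)
  rcases hsub.eq_empty_or_singleton with he | ⟨y, hy⟩
  · simp [he]
  · rw [hy]; exact measure_singleton y
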